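/- Let q be a power of 2 with q ≥ 4. Then every element of PGL₂(𝔽_q), acting on the projective line ℙ¹(𝔽_q) (a set of q+1 points), induces an even permutation. -/

import Mathlib

open Matrix Projectivization

variable {F : Type} [Field F] [Fintype F] [DecidableEq F]
variable [Fintype (Projectivization F (Fin 2 → F))]
variable [DecidableEq (Projectivization F (Fin 2 → F))]

private theorem PGL2Aux.mulVec_ne_zero {M : Matrix (Fin 2) (Fin 2) F} (h : IsUnit M)
    {v : Fin 2 → F} (hv : v ≠ 0) : M.mulVec v ≠ 0 := by
  intro h0
  exact hv (Matrix.mulVec_injective_iff_isUnit.2 h (by simpa using h0))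

/-- The permutation of the projective line induced by an invertible matrix. -/
noncomputable def PGL2Aux.permOf (M : Matrix (Fin 2) (Fin 2) F) (h : IsUnit M) :
    Equiv.Perm (Projectivization F (Fin 2 → F)) :=
  Equiv.ofBijective
    (Projectivization.map M.mulVecLin
      (by simpa [Matrix.coe_mulVecLin] using Matrix.mulVec_injective_iff_isUnit.2 h))
    (Finite.injective_iff_bijective.1 (Projectivization.map_injective _ _))

theorem PGL2Aux.permOf_mk (M : Matrix (Fin 2) (Fin 2) F) (h : IsUnit M)
    (v : Fin 2 → F) (hv : v ≠ 0) :
    PGL2Aux.permOf M h (Projectivization.mk F v hv)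
      = Projectivization.mk F (M.mulVec v) (PGL2Aux.mulVec_ne_zero h hv) := by
  simpa [PGL2Aux.permOf] using Projectivization.map_mk M.mulVecLin _ v hv
set_option linter.unusedSectionVars false

namespace PGL2Aux

theorem permOf_mul (M N : Matrix (Fin 2) (Fin 2) F) (hM : IsUnit M) (hN : IsUnit N) :
    permOf (M * N) (hM.mul hN) = permOf M hM * permOf N hN := by
  apply Equiv.ext
  intro p
  induction p using Projectivization.ind with
  | h v hv =>
    simp only [Equiv.Perm.mul_apply, permOf_mk, Matrix.mulVec_mulVec]

theorem permOf_one (h : IsUnit (1 : Matrix (Fin 2) (Fin 2) F)) :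
    permOf (1 : Matrix (Fin 2) (Fin 2) F) h = 1 := by
  apply Equiv.ext
  intro p
  induction p using Projectivization.ind with
  | h v hv => simp [permOf_mk]

theorem permOf_congr {M N : Matrix (Fin 2) (Fin 2) F} (e : M = N) (h : IsUnit M) :
    permOf M h = permOf N (e ▸ h) := by subst e; rfl

theorem permOf_pow (M : Matrix (Fin 2) (Fin 2) F) (h : IsUnit M) (k : ℕ) :
    permOf (M ^ k) (h.pow k) = (permOf M h) ^ k := by
  induction k with
  | zero => simpa using permOf_one _
  | succ k ih =>
    have e : permOf (M ^ (k + 1)) (h.pow (k + 1)) = permOf (M ^ k * M) ((h.pow k).mul h) :=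
      permOf_congr (pow_succ M k) _
    rw [e, permOf_mul _ _ (h.pow k) h, ih, pow_succ]

end PGL2Aux
namespace PGL2Aux

theorem sign_eq_one_of_odd_pow {σ : Equiv.Perm (Projectivization F (Fin 2 → F))}
    {k : ℕ} (hk : Odd k) (h : σ ^ k = 1) : Equiv.Perm.sign σ = 1 := by
  have h2 : (Equiv.Perm.sign σ) ^ k = 1 := by
    rw [← map_pow, h]; exact Equiv.Perm.sign.map_one
  rcases Int.units_eq_one_or (Equiv.Perm.sign σ) with h1 | h1
  · exact h1
  · rw [h1, Odd.neg_one_pow hk] at h2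
    exact absurd h2 (by decide)

theorem sign_permOf_diagonal (hodd : Odd (Fintype.card F - 1))
    (d : Fin 2 → F) (h : IsUnit (Matrix.diagonal d)) :
    Equiv.Perm.sign (permOf (Matrix.diagonal d) h) = 1 := by
  have hd : ∀ i, d i ≠ 0 := by
    intro i hi
    have := h.ne_zero
    have hdet : IsUnit (Matrix.diagonal d).det := (Matrix.isUnit_iff_isUnit_det _).1 h
    rw [Matrix.det_diagonal] at hdet
    rw [isUnit_iff_ne_zero] at hdet
    exact hdet (Finset.prod_eq_zero (Finset.mem_univ i) hi)
  apply sign_eq_one_of_odd_pow hodd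
  rw [← permOf_pow]
  have e1 : Matrix.diagonal d ^ (Fintype.card F - 1) = 1 := by
    rw [Matrix.diagonal_pow]
    have : (d ^ (Fintype.card F - 1)) = 1 := by
      funext i
      exact FiniteField.pow_card_sub_one_eq_one (d i) (hd i)
    rw [this]
    exact Matrix.diagonal_one
  rw [permOf_congr e1]
  exact permOf_one _

end PGL2Aux
namespace PGL2Aux

theorem exists_ne_zero_ne_one (hcard : 3 ≤ Fintype.card F) : ∃ a : F, a ≠ 0 ∧ a ≠ 1 := by
  by_contra hc
  push_neg at hc
  have hsub : (Finset.univ : Finset F) ⊆ {0, 1} := by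
    intro a _
    simp only [Finset.mem_insert, Finset.mem_singleton]
    by_cases h0 : a = 0
    · exact Or.inl h0
    · exact Or.inr (hc a h0)
  have h1 := Finset.card_le_card hsub
  have h2 : ({0, 1} : Finset F).card ≤ 2 :=
    (Finset.card_insert_le _ _).trans (by simp)
  rw [Finset.card_univ] at h1
  omega

theorem diag_mul_transvection (i j : Fin 2) (hij : i ≠ j) (a c : F) :
    Matrix.diagonal (fun k => if k = i then a else 1) * Matrix.transvection i j c
      = Matrix.transvection i j (a * c) * Matrix.diagonal (fun k => if k = i then a else 1) := by
  fin_cases i <;> fin_cases j <;> (try exact absurd rfl hij) <;> ext x y <;>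
      fin_cases x <;> fin_cases y <;>
    simp [Matrix.transvection, Matrix.single, Matrix.mul_apply, Fin.sum_univ_two,
      Matrix.one_apply, Matrix.diagonal] <;> ring

end PGL2Aux
namespace PGL2Aux

theorem sign_permOf_transvection (hcard : 3 ≤ Fintype.card F)
    (i j : Fin 2) (hij : i ≠ j) (c : F) (h : IsUnit (Matrix.transvection i j c)) :
    Equiv.Perm.sign (permOf (Matrix.transvection i j c) h) = 1 := by
  obtain ⟨a, ha0, ha1⟩ := exists_ne_zero_ne_one hcard
  have ha : a - 1 ≠ 0 := sub_ne_zero.2 ha1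
  set c₀ : F := (a - 1)⁻¹ * c with hc₀
  have hc : c + c₀ = a * c₀ := by
    have : (a - 1) * c₀ = c := by rw [hc₀]; field_simp
    rw [← this]; ring
  have hT : ∀ x : F, IsUnit (Matrix.transvection i j x) := fun x =>
    ⟨⟨Matrix.transvection i j x, Matrix.transvection i j (-x),
      by rw [Matrix.transvection_mul_transvection_same i j hij, add_neg_cancel,
        Matrix.transvection_zero],
      by rw [Matrix.transvection_mul_transvection_same i j hij, neg_add_cancel,
        Matrix.transvection_zero]⟩, rfl⟩
  have hD : IsUnit (Matrix.diagonal fun k => if k = i then a else (1 : F)) := by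
    rw [Matrix.isUnit_iff_isUnit_det, Matrix.det_diagonal]
    simp [Finset.prod_ite_eq', ha0]
  have K : Matrix.transvection i j c * Matrix.transvection i j c₀
        * Matrix.diagonal (fun k => if k = i then a else (1 : F))
      = Matrix.diagonal (fun k => if k = i then a else (1 : F))
        * Matrix.transvection i j c₀ := by
    rw [Matrix.transvection_mul_transvection_same i j hij, hc, diag_mul_transvection i j hij]
  have KP : permOf _ h * permOf _ (hT c₀) * permOf _ hD
      = permOf _ hD * permOf _ (hT c₀) := by
    rw [← permOf_mul, ← permOf_mul, ← permOf_mul]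
    exact permOf_congr K _
  have hs := congrArg Equiv.Perm.sign KP
  simp only [_root_.map_mul] at hs
  set s1 := Equiv.Perm.sign (permOf _ h)
  set s2 := Equiv.Perm.sign (permOf _ (hT c₀))
  set s3 := Equiv.Perm.sign (permOf _ hD)
  have h2 : s1 * (s2 * s3) = 1 * (s2 * s3) := by
    rw [one_mul, ← mul_assoc, hs, mul_comm]
  exact mul_right_cancel h2

end PGL2Aux

/-- For `q = 2^n` with `n ≥ 2`, every element of `PGL₂(𝔽_q)` (given by a linear
automorphism `g` of `𝔽_q²`) induces an even permutation of the projective line `ℙ¹(𝔽_q)`. -/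
theorem pgl2_even_char_two (F : Type) [Field F] [Fintype F] [DecidableEq F]
    (n : ℕ) (hn : 2 ≤ n) (hq : Fintype.card F = 2 ^ n)
    [Fintype (Projectivization F (Fin 2 → F))]
    [DecidableEq (Projectivization F (Fin 2 → F))]
    (g : (Fin 2 → F) ≃ₗ[F] (Fin 2 → F))
    (σ : Equiv.Perm (Projectivization F (Fin 2 → F)))
    (hσ : ∀ (v : Fin 2 → F) (hv : v ≠ 0),
      σ (Projectivization.mk F v hv) =
        Projectivization.mk F (g v) (by simpa using hv)) :
    Equiv.Perm.sign σ = 1 := by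
  have hcard : 3 ≤ Fintype.card F := by
    rw [hq]
    calc 3 ≤ 2 ^ 2 := by norm_num
    _ ≤ 2 ^ n := Nat.pow_le_pow_right (by norm_num) hn
  have hodd : Odd (Fintype.card F - 1) := by
    rw [hq]
    refine Nat.Even.sub_odd Nat.one_le_two_pow ?_ odd_one
    exact (Nat.even_pow).2 ⟨even_two, by omega⟩
  set M := LinearMap.toMatrix' (g : (Fin 2 → F) →ₗ[F] (Fin 2 → F)) with hM
  have hMg : ∀ v, M.mulVec v = g v := by
    intro v
    rw [← Matrix.toLin'_apply, hM, Matrix.toLin'_toMatrix']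
    rfl
  have hU : IsUnit M := by
    refine ⟨⟨M, LinearMap.toMatrix' (g.symm : (Fin 2 → F) →ₗ[F] (Fin 2 → F)), ?_, ?_⟩, rfl⟩
    · rw [hM, ← LinearMap.toMatrix'_comp]
      simp
    · rw [hM, ← LinearMap.toMatrix'_comp]
      simp
  have hσ' : σ = PGL2Aux.permOf M hU := by
    apply Equiv.ext
    intro p
    induction p using Projectivization.ind with
    | h v hv =>
      rw [hσ v hv, PGL2Aux.permOf_mk]
      simp_rw [hMg v]
  rw [hσ']
  have hdet : M.det ≠ 0 := by
    intro h0
    rw [Matrix.isUnit_iff_isUnit_det, h0] at hU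
    simpa using hU
  refine Matrix.diagonal_transvection_induction_of_det_ne_zero
    (fun N => ∀ hN : IsUnit N, Equiv.Perm.sign (PGL2Aux.permOf N hN) = 1) M hdet ?_ ?_ ?_ hU
  · intro D _ hU'
    exact PGL2Aux.sign_permOf_diagonal hodd D hU'
  · intro t hU'
    exact PGL2Aux.sign_permOf_transvection hcard t.i t.j t.hij t.c hU'
  · intro A B hA hB pA pB hU'
    have hA' : IsUnit A := (Matrix.isUnit_iff_isUnit_det A).2 (isUnit_iff_ne_zero.2 hA)
    have hB' : IsUnit B := (Matrix.isUnit_iff_isUnit_det B).2 (isUnit_iff_ne_zero.2 hB)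
    have e : PGL2Aux.permOf (A * B) hU' = PGL2Aux.permOf A hA' * PGL2Aux.permOf B hB' :=
      PGL2Aux.permOf_mul A B hA' hB'
    rw [e, _root_.map_mul, pA hA', pB hB', one_mul]
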